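/- For every commutative ring A, every family of weights R : ℤ → A, every integer n and every natural number i ≥ 1, the following identity holds: Z_{n−1,n−1}(2i) = (Z_{n,n−1}(2i−1) − R_{n−1}R_{n+1}·Z_{n−2,n+1}(2i−1)) + Σ_{j=1}^{i} (Z_{n−j,n+j−1}(2i−1) − R_{n−j−1}R_{n+j+1}·Z_{n−j−2,n+j+1}(2i−1)) · ∏_{ℓ=1}^{j} R_{n−ℓ}. -/

import Mathlib

open Finset

variable {A : Type*} [CommRing A]

/-- End height of a walk starting at a given height, with steps given by a list of
Booleans (`true` = ascending step `+1`, `false` = descending step `-1`). -/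
def walkEnd : ℤ → List Bool → ℤ
  | a, [] => a
  | a, true :: s => walkEnd (a + 1) s
  | a, false :: s => walkEnd (a - 1) s

/-- Weight of a walk: the product of `R h` over all descending steps `h → h - 1`. -/
def walkWeight (R : ℤ → A) : ℤ → List Bool → A
  | _, [] => 1
  | a, true :: s => walkWeight R (a + 1) s
  | a, false :: s => R a * walkWeight R (a - 1) s

/-- Whether every height visited by the walk (including the first and last) is `≥ c`. -/
def walkAbove (c : ℤ) : ℤ → List Bool → Bool
  | a, [] => decide (c ≤ a)
  | a, true :: s => decide (c ≤ a) && walkAbove c (a + 1) s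
  | a, false :: s => decide (c ≤ a) && walkAbove c (a - 1) s

/-- `Zw R a b k`: the generating function of walks of length `k` from height `a` to
height `b`, each walk weighted by `R h` per descending step from height `h`. -/
def Zw (R : ℤ → A) (a b : ℤ) (k : ℕ) : A :=
  ∑ s : Fin k → Bool,
    if walkEnd a (List.ofFn s) = b then walkWeight R a (List.ofFn s) else 0

/-- `Zwp R a b k`: the same generating function, restricted to walks staying at
heights `≥ a` ("positive walks"). -/
def Zwp (R : ℤ → A) (a b : ℤ) (k : ℕ) : A :=
  ∑ s : Fin k → Bool,
    if walkEnd a (List.ofFn s) = b ∧ walkAbove a a (List.ofFn s) = true then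
      walkWeight R a (List.ofFn s)
    else 0

/-- `Pdim R a b k`: hard-dimer partition function on the segment `[a,b]`: the sum over
`k`-element subsets `S` of `{a+1, …, b}` with no two consecutive elements of
`∏ i in S, R i` (a dimer on `[i-1,i]` carries weight `R i`). -/
noncomputable def Pdim (R : ℤ → A) (a b : ℤ) (k : ℕ) : A :=
  ∑ S ∈ Finset.powersetCard k (Finset.Icc (a + 1) b),
    if ∀ i ∈ S, i + 1 ∉ S then ∏ i ∈ S, R i else 0

/-- `Vp R g m a b = Σ_{k=1}^{m} g_k • Zw R a b (2k-1)`: grand-canonical generating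
function for walks of odd length from `a` to `b`. -/
def Vp (R : ℤ → A) (g : ℕ → A) (m : ℕ) (a b : ℤ) : A :=
  ∑ k ∈ Finset.Icc 1 m, g k * Zw R a b (2 * k - 1)

/-- The conserved quantities `Γ_{2i}(n)`; `Gam R g m i n` stands for `Γ_{2i}(n)`. -/
def Gam (R : ℤ → A) (g : ℕ → A) (m : ℕ) (i : ℕ) (n : ℤ) : A :=
  if i = 0 then R (n - 1) - Vp R g m (n - 1) (n - 2) + (if n = 0 then 1 else 0)
  else
    Zwp R (n - 1) (n - 1) (2 * i) *
        (R (n - 1) - Vp R g m (n - 1) (n - 2) + (if n = 0 then 1 else 0)) -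
      ∑ j ∈ Finset.Icc 1 i,
        Zwp R (n - 1) (n - 1 + 2 * (j : ℤ)) (2 * i) * Vp R g m (n + 2 * (j : ℤ) - 1) (n - 2)

/-- The symmetric conserved quantities `Γ̃_{2i}(n)`; `Gamt R g m i n` stands
for `Γ̃_{2i}(n)`. -/
def Gamt (R : ℤ → A) (g : ℕ → A) (m : ℕ) (i : ℕ) (n : ℤ) : A :=
  if i = 0 then R n - Vp R g m n (n - 1)
  else
    (Zw R n (n - 1) (2 * i - 1) - R (n - 1) * R (n + 1) * Zw R (n - 2) (n + 1) (2 * i - 1)) *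
        (R n - Vp R g m n (n - 1)) -
      ∑ j ∈ Finset.Icc 1 i,
        (Zw R (n - (j : ℤ)) (n + (j : ℤ) - 1) (2 * i - 1) -
            R (n - (j : ℤ) - 1) * R (n + (j : ℤ) + 1) *
              Zw R (n - (j : ℤ) - 2) (n + (j : ℤ) + 1) (2 * i - 1)) *
          Vp R g m (n + (j : ℤ)) (n - (j : ℤ) - 1)

/-- The master equation: `R i = 0` for `i < 0` and `R n = 1 + V'_{n,n-1}` for `n ≥ 0`. -/
def MasterEq (R : ℤ → A) (g : ℕ → A) (m : ℕ) : Prop :=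
  (∀ i : ℤ, i < 0 → R i = 0) ∧ ∀ n : ℤ, 0 ≤ n → R n = 1 + Vp R g m n (n - 1)

/-- `Zodd R a b i = Zw R a b (2i-1)`, with the convention that for `i = 0`
(walks of length `-1`) it equals `1` if `b = a - 1` and `0` otherwise. -/
def Zodd (R : ℤ → A) (a b : ℤ) (i : ℕ) : A :=
  if i = 0 then (if b = a - 1 then 1 else 0) else Zw R a b (2 * i - 1)

/-- Binomial coefficient with an integer lower index, with the convention that it
vanishes for negative lower index. -/
def Cz (n : ℕ) (p : ℤ) : ℤ := if 0 ≤ p then n.choose p.toNat else 0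


lemma zw_zero' (R : ℤ → A) (a b : ℤ) : Zw R a b 0 = if a = b then 1 else 0 := by
  simp [Zw, walkEnd, walkWeight]

lemma zw_succ' (R : ℤ → A) (a b : ℤ) (k : ℕ) :
    Zw R a b (k + 1) = Zw R (a + 1) b k + R a * Zw R (a - 1) b k := by
  rw [Zw, ← (Fin.consEquiv fun _ : Fin (k + 1) => Bool).sum_comp]
  rw [Fintype.sum_prod_type, Fintype.sum_bool]
  simp [Zw, List.ofFn_succ, Fin.consEquiv, walkEnd, walkWeight, Finset.mul_sum, mul_ite]

lemma walkEnd_le' (a : ℤ) (l : List Bool) : walkEnd a l ≤ a + l.length := by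
  induction l generalizing a with
  | nil => simp [walkEnd]
  | cons x t ih =>
    cases x <;> simp only [walkEnd, List.length_cons] <;>
      · first
        | (have := ih (a - 1); push_cast at this ⊢; omega)
        | (have := ih (a + 1); push_cast at this ⊢; omega)

lemma zw_vanish' (R : ℤ → A) (a b : ℤ) (k : ℕ) (h : a + k < b) : Zw R a b k = 0 := by
  rw [Zw]
  apply Finset.sum_eq_zero
  intro s _
  rw [if_neg]
  intro he
  have := walkEnd_le' a (List.ofFn s)
  simp only [List.length_ofFn] at this
  omega

lemma zw_cross' (R : ℤ → A) (b : ℤ) (k : ℕ) : ∀ a : ℤ,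
    Zw R a b k + R (b + 2) * Zw R a (b + 2) k =
      Zw R (a + 1) (b + 1) k + R a * Zw R (a - 1) (b + 1) k := by
  induction k with
  | zero =>
    intro a
    simp only [zw_zero']
    split_ifs <;> (try omega) <;> subst_vars <;> ring_nf
  | succ k ih =>
    intro a
    rw [zw_succ', zw_succ', zw_succ', zw_succ']
    have h1 := ih (a + 1)
    have h2 := ih (a - 1)
    ring_nf
    ring_nf at h1 h2
    linear_combination h1 + R a * h2

lemma zw_tele' (R : ℤ → A) (n : ℤ) (k : ℕ) (m : ℕ) :
    R (n - 1) * Zw R (n - 2) (n - 1) k + R (n - 1) * R (n + 1) * Zw R (n - 2) (n + 1) k =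
      (∑ j ∈ Finset.Icc 1 m,
        (Zw R (n - (j : ℤ)) (n + (j : ℤ) - 1) k -
            R (n - (j : ℤ) - 1) * R (n + (j : ℤ) + 1) *
              Zw R (n - (j : ℤ) - 2) (n + (j : ℤ) + 1) k) *
          ∏ l ∈ Finset.Icc 1 j, R (n - (l : ℤ)))
      + (∏ l ∈ Finset.Icc 1 m, R (n - (l : ℤ))) *
        (R (n - (m : ℤ) - 1) * Zw R (n - (m : ℤ) - 2) (n + (m : ℤ) - 1) k +
          R (n - (m : ℤ) - 1) * R (n + (m : ℤ) + 1) *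
            Zw R (n - (m : ℤ) - 2) (n + (m : ℤ) + 1) k) := by
  induction m with
  | zero => simp
  | succ m ih =>
    rw [Finset.sum_Icc_succ_top (by omega), Finset.prod_Icc_succ_top (by omega), ih]
    have hc := zw_cross' R (n + (m : ℤ) - 1) k (n - (m : ℤ) - 2)
    push_cast
    rw [show n - ((m:ℤ) + 1) = n - (m:ℤ) - 1 from by ring,
        show n + ((m:ℤ) + 1) = n + (m:ℤ) + 1 from by ring,
        show n - (m:ℤ) - 1 - 1 = n - (m:ℤ) - 2 from by ring,
        show n - (m:ℤ) - 1 - 2 = n - (m:ℤ) - 3 from by ring,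
        show n + (m:ℤ) + 1 - 1 = n + (m:ℤ) from by ring,
        show n + (m:ℤ) + 1 + 1 = n + (m:ℤ) + 2 from by ring]
    rw [show n + (m:ℤ) - 1 + 2 = n + (m:ℤ) + 1 from by ring,
        show n - (m:ℤ) - 2 + 1 = n - (m:ℤ) - 1 from by ring,
        show n + (m:ℤ) - 1 + 1 = n + (m:ℤ) from by ring,
        show n - (m:ℤ) - 2 - 1 = n - (m:ℤ) - 3 from by ring] at hc
    linear_combination (∏ l ∈ Finset.Icc 1 m, R (n - (l : ℤ))) * R (n - (m:ℤ) - 1) * hc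

/-- the identity expressing `Z_{n-1,n-1}(2i)` in terms of the
symmetric combinations of walk generating functions. -/
theorem stmt_16 {A : Type*} [CommRing A] (R : ℤ → A) (n : ℤ) (i : ℕ) (hi : 1 ≤ i) :
    Zw R (n - 1) (n - 1) (2 * i) =
      (Zw R n (n - 1) (2 * i - 1) -
          R (n - 1) * R (n + 1) * Zw R (n - 2) (n + 1) (2 * i - 1)) +
        ∑ j ∈ Finset.Icc 1 i,
          (Zw R (n - (j : ℤ)) (n + (j : ℤ) - 1) (2 * i - 1) -
              R (n - (j : ℤ) - 1) * R (n + (j : ℤ) + 1) *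
                Zw R (n - (j : ℤ) - 2) (n + (j : ℤ) + 1) (2 * i - 1)) *
            ∏ l ∈ Finset.Icc 1 j, R (n - (l : ℤ)) := by
  obtain ⟨j, rfl⟩ : ∃ j, i = j + 1 := ⟨i - 1, by omega⟩
  rw [show 2 * (j + 1) - 1 = 2 * j + 1 from by omega,
      show 2 * (j + 1) = (2 * j + 1) + 1 from by ring, zw_succ',
      show n - 1 + 1 = n from by ring, show n - 1 - 1 = n - 2 from by ring]
  have tele := zw_tele' R n (2 * j + 1) (j + 1)
  have tv1 : Zw R (n - ((j + 1 : ℕ) : ℤ) - 2) (n + ((j + 1 : ℕ) : ℤ) - 1) (2 * j + 1) = 0 :=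
    zw_vanish' _ _ _ _ (by push_cast; omega)
  have tv2 : Zw R (n - ((j + 1 : ℕ) : ℤ) - 2) (n + ((j + 1 : ℕ) : ℤ) + 1) (2 * j + 1) = 0 :=
    zw_vanish' _ _ _ _ (by push_cast; omega)
  linear_combination tele +
    (∏ l ∈ Finset.Icc 1 (j + 1), R (n - (l : ℤ))) * R (n - ((j + 1 : ℕ) : ℤ) - 1) * tv1 +
    (∏ l ∈ Finset.Icc 1 (j + 1), R (n - (l : ℤ))) * R (n - ((j + 1 : ℕ) : ℤ) - 1) *
      R (n + ((j + 1 : ℕ) : ℤ) + 1) * tv2
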